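/- (Markov chain tree theorem) For an ergodic Markov chain with irreducible stochastic transition matrix T and corresponding weighted digraph G (arc (i,j) has weight t_{ij} for i ≠ j), the stationary probability of state j equals q_j / Σ_{k=1}^n q_k, where q_j is the total weight of spanning trees of G converging to j. -/

import Mathlib

open scoped Classical
open Finset Matrix

namespace MFPT

variable {n : ℕ}

/-- The step relation of a functional subgraph: `a → b` when `F a = some b`. -/
def Step (F : Fin n → Option (Fin n)) (a b : Fin n) : Prop := F a = some b

/-- `F` is a spanning in-forest of the weighted digraph with weight matrix `w`:
every chosen arc is a genuine (loopless, positive-weight) arc and there is no directed cycle.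
Each weak component of such a functional digraph is a converging tree (root = the vertex
mapped to `none`). -/
def IsInForest (w : Matrix (Fin n) (Fin n) ℝ) (F : Fin n → Option (Fin n)) : Prop :=
  (∀ v u, F v = some u → v ≠ u ∧ 0 < w v u) ∧ ∀ v, ¬ Relation.TransGen (Step F) v v

/-- Weight of a spanning subgraph: the product of its arc weights. -/
noncomputable def forestWeight (w : Matrix (Fin n) (Fin n) ℝ) (F : Fin n → Option (Fin n)) : ℝ :=
  ∏ v, (F v).elim 1 (fun u => w v u)

/-- Number of arcs of a functional subgraph. -/
def arcCount (F : Fin n → Option (Fin n)) : ℕ :=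
  (Finset.univ.filter fun v => (F v).isSome).card

/-- Vertex `i` belongs to the tree of `F` converging to (rooted at) `j`. -/
def InTreeOf (F : Fin n → Option (Fin n)) (i j : Fin n) : Prop :=
  Relation.ReflTransGen (Step F) i j ∧ F j = none

/-- `σ_k`: total weight of spanning in-forests with `k` arcs. -/
noncomputable def sigmaW (w : Matrix (Fin n) (Fin n) ℝ) (k : ℕ) : ℝ :=
  ∑ F : Fin n → Option (Fin n),
    if IsInForest w F ∧ arcCount F = k then forestWeight w F else 0

/-- `Q_k`: the matrix whose `(i,j)` entry is the total weight of in-forests with `k` arcs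
in which `i` belongs to the tree converging to `j`. -/
noncomputable def Qmat (w : Matrix (Fin n) (Fin n) ℝ) (k : ℕ) : Matrix (Fin n) (Fin n) ℝ :=
  Matrix.of fun i j => ∑ F : Fin n → Option (Fin n),
    if IsInForest w F ∧ arcCount F = k ∧ InTreeOf F i j then forestWeight w F else 0

/-- `q_j`: total weight of spanning trees converging to `j` (in-forests with `n-1` arcs
whose unique root is `j`). -/
noncomputable def treeWeight (w : Matrix (Fin n) (Fin n) ℝ) (j : Fin n) : ℝ :=
  ∑ F : Fin n → Option (Fin n),
    if IsInForest w F ∧ arcCount F = n - 1 ∧ F j = none then forestWeight w F else 0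

/-- `f_{ij}`: total weight of 2-tree in-forests having one tree containing `i` and the other
tree converging to `j`. -/
noncomputable def fWeight (w : Matrix (Fin n) (Fin n) ℝ) (i j : Fin n) : ℝ :=
  ∑ F : Fin n → Option (Fin n),
    if IsInForest w F ∧ arcCount F = n - 2 ∧ F j = none ∧
        ¬ Relation.ReflTransGen (Step F) i j
      then forestWeight w F else 0

/-- The Laplacian matrix of the weighted digraph with weight matrix `w`. -/
noncomputable def lap (w : Matrix (Fin n) (Fin n) ℝ) : Matrix (Fin n) (Fin n) ℝ :=
  Matrix.of fun i j => if i = j then ∑ k ∈ Finset.univ.erase i, w i k else - w i j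

/-- `X` is the group inverse of `L`. -/
def IsGroupInverse (L X : Matrix (Fin n) (Fin n) ℝ) : Prop :=
  L * X * L = L ∧ X * L * X = X ∧ L * X = X * L

/-- `T` is (row-)stochastic. -/
def IsStochastic (T : Matrix (Fin n) (Fin n) ℝ) : Prop :=
  (∀ i j, 0 ≤ T i j) ∧ ∀ i, ∑ j, T i j = 1

/-- Irreducibility of `T`. -/
def IsIrreducible (T : Matrix (Fin n) (Fin n) ℝ) : Prop :=
  ∀ i j, ∃ k : ℕ, 0 < (T ^ k) i j

/-- Ergodicity (primitivity) of `T`: some power of `T` is entrywise positive. -/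
def IsErgodic (T : Matrix (Fin n) (Fin n) ℝ) : Prop :=
  ∃ N : ℕ, ∀ i j, 0 < (T ^ N) i j

/-- `π` is a stationary distribution of `T`. -/
def IsStationary (T : Matrix (Fin n) (Fin n) ℝ) (π : Fin n → ℝ) : Prop :=
  (∀ i, 0 ≤ π i) ∧ (∑ i, π i = 1) ∧ ∀ j, ∑ i, π i * T i j = π j

/-- Probability of the trajectory `p` of length `k` under transition matrix `T`. -/
noncomputable def pathProb (T : Matrix (Fin n) (Fin n) ℝ) (k : ℕ)
    (p : Fin (k + 1) → Fin n) : ℝ :=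
  ∏ t : Fin k, T (p t.castSucc) (p t.succ)

/-- `Pr(F_{ij} = k)`: probability that, starting at `i`, the chain first reaches `j`
(at a step `p ≥ 1`) exactly at time `k`. -/
noncomputable def firstPassageProb (T : Matrix (Fin n) (Fin n) ℝ) (i j : Fin n) (k : ℕ) : ℝ :=
  ∑ p : Fin (k + 1) → Fin n,
    if p 0 = i ∧ p (Fin.last k) = j ∧
        (∀ t : Fin (k + 1), t ≠ 0 → t ≠ Fin.last k → p t ≠ j)
      then pathProb T k p else 0

/-- Mean first passage time `m_{ij} = E F_{ij} = ∑ k k·Pr(F_{ij}=k)`. -/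
noncomputable def mfpt (T : Matrix (Fin n) (Fin n) ℝ) (i j : Fin n) : ℝ :=
  ∑' k : ℕ, (k : ℝ) * firstPassageProb T i j k

end MFPT

namespace MFPT

variable {n : ℕ}

def StepT (G : Fin n → Fin n) (a b : Fin n) : Prop := G a = b

lemma reflTransGen_iff_iterate (G : Fin n → Fin n) (x y : Fin n) :
    Relation.ReflTransGen (StepT G) x y ↔ ∃ m, G^[m] x = y := by
  constructor
  · intro h
    induction h with
    | refl => exact ⟨0, rfl⟩
    | tail _ hs ih =>
      obtain ⟨m, hm⟩ := ih
      exact ⟨m + 1, by rw [Function.iterate_succ_apply', hm]; exact hs⟩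
  · rintro ⟨m, rfl⟩
    induction m with
    | zero => exact Relation.ReflTransGen.refl
    | succ m ih =>
      rw [Function.iterate_succ_apply']
      exact ih.tail rfl

lemma iterate_periodic (G : Fin n → Fin n) (v : Fin n) (m : ℕ) (hm : G^[m] v = v) (k : ℕ) :
    G^[m * k] v = v := by
  induction k with
  | zero => simp
  | succ k ih => rw [Nat.mul_succ, Function.iterate_add_apply, hm, ih]

lemma iterate_mod (G : Fin n → Fin n) (v : Fin n) (m : ℕ) (hm : G^[m] v = v) (q : ℕ) :
    G^[q] v = G^[q % m] v := by
  conv_lhs => rw [← Nat.mod_add_div q m, Function.iterate_add_apply, iterate_periodic G v m hm (q / m)]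

/-- Key avoidance lemma: if `F` agrees with `G` where defined and is undefined at `x`,
an `F`-cycle through `v` forces the `G`-orbit of `v` to avoid `x`. -/
lemma cycle_avoid {F : Fin n → Option (Fin n)} {G : Fin n → Fin n} {x v : Fin n}
    (hFG : ∀ a b, Step F a b → a ≠ x ∧ G a = b)
    (hcyc : Relation.TransGen (Step F) v v)
    (hreach : ∃ t, G^[t] v = x) : False := by
  have key : ∀ a b, Relation.TransGen (Step F) a b →
      ∃ m, 1 ≤ m ∧ G^[m] a = b ∧ ∀ q < m, G^[q] a ≠ x := by
    intro a b h
    induction h with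
    | single hs =>
      exact ⟨1, le_refl 1, (hFG _ _ hs).2, by
        intro q hq; interval_cases q; exact (hFG _ _ hs).1⟩
    | tail h hs ih =>
      obtain ⟨m, h1, h2, h3⟩ := ih
      refine ⟨m + 1, by omega, ?_, ?_⟩
      · rw [Function.iterate_succ_apply', h2]; exact (hFG _ _ hs).2
      · intro q hq
        rcases Nat.lt_or_ge q m with h' | h'
        · exact h3 q h'
        · have : q = m := by omega
          subst this; rw [h2]; exact (hFG _ _ hs).1
  obtain ⟨m, hm1, hm2, hm3⟩ := key v v hcyc
  obtain ⟨t, ht⟩ := hreach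
  have : G^[t] v = G^[t % m] v := iterate_mod G v m hm2 t
  exact hm3 (t % m) (Nat.mod_lt _ (by omega)) (by rw [← this, ht])

lemma root_unique {F : Fin n → Option (Fin n)} {i : Fin n}
    (hc : arcCount F = n - 1) (hi : F i = none) : ∀ v, F v = none ↔ v = i := by
  have h1 : (Finset.univ.filter fun v : Fin n => ¬ (F v).isSome).card = 1 := by
    have := Finset.card_filter_add_card_filter_not
      (s := (Finset.univ : Finset (Fin n))) (p := fun v => (F v).isSome)
    have hn : 1 ≤ n := Nat.pos_of_ne_zero (by rintro rfl; exact i.elim0)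
    simp only [Finset.card_univ, Fintype.card_fin] at this
    unfold arcCount at hc
    omega
  obtain ⟨a, ha⟩ := Finset.card_eq_one.mp h1
  have hmem : ∀ v : Fin n, F v = none ↔ v ∈ Finset.univ.filter fun v : Fin n => ¬ (F v).isSome := by
    intro v
    simp only [Finset.mem_filter, Finset.mem_univ, true_and, Option.not_isSome_iff_eq_none]
  intro v
  have hia : i = a := by have := (hmem i).mp hi; rw [ha] at this; simpa using this
  rw [hmem, ha, Finset.mem_singleton, hia]

lemma forest_acyclic_wf {F : Fin n → Option (Fin n)}
    (h : ∀ v, ¬ Relation.TransGen (Step F) v v) :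
    WellFounded (fun a b => F b = some a) := by
  have hir : IsIrrefl (Fin n) (Relation.TransGen fun a b => F b = some a) := by
    constructor; intro a ha
    exact h a ((Relation.transGen_swap).mp ha)
  have htr : IsTrans (Fin n) (Relation.TransGen fun a b => F b = some a) :=
    ⟨fun _ _ _ => Relation.TransGen.trans⟩
  have := Finite.wellFounded_of_trans_of_irrefl (Relation.TransGen fun a b : Fin n => F b = some a)
  exact Subrelation.wf (r := Relation.TransGen fun a b : Fin n => F b = some a)
    (fun h' => Relation.TransGen.single h') this

lemma forest_reaches_root {w : Matrix (Fin n) (Fin n) ℝ} {F : Fin n → Option (Fin n)}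
    (hF : IsInForest w F) (v : Fin n) :
    ∃ r, Relation.ReflTransGen (Step F) v r ∧ F r = none := by
  induction v using WellFounded.induction (forest_acyclic_wf hF.2) with
  | _ v ih =>
    cases hv : F v with
    | none => exact ⟨v, Relation.ReflTransGen.refl, hv⟩
    | some u =>
      obtain ⟨r, hr1, hr2⟩ := ih u hv
      exact ⟨r, Relation.ReflTransGen.head hv hr1, hr2⟩

lemma tree_reaches {w : Matrix (Fin n) (Fin n) ℝ} {F : Fin n → Option (Fin n)} {i : Fin n}
    (hF : IsInForest w F) (hc : arcCount F = n - 1) (hi : F i = none) (v : Fin n) :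
    Relation.ReflTransGen (Step F) v i := by
  obtain ⟨r, hr1, hr2⟩ := forest_reaches_root hF v
  rwa [(root_unique hc hi r).mp hr2] at hr1

/-- Good total functional digraphs: loopless positive arcs, everything reaches `j`. -/
def PC (w : Matrix (Fin n) (Fin n) ℝ) (j : Fin n) (G : Fin n → Fin n) : Prop :=
  (∀ v, G v ≠ v ∧ 0 < w v (G v)) ∧ ∀ v, Relation.ReflTransGen (StepT G) v j

def TreeTo (w : Matrix (Fin n) (Fin n) ℝ) (j : Fin n) (F : Fin n → Option (Fin n)) : Prop :=
  IsInForest w F ∧ arcCount F = n - 1 ∧ F j = none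

lemma pred_uniq (G : Fin n → Fin n) (j : Fin n) {u₁ u₂ : Fin n}
    (h₁ : G u₁ = j ∧ ∃ m, G^[m] j = u₁) (h₂ : G u₂ = j ∧ ∃ m, G^[m] j = u₂) : u₁ = u₂ := by
  obtain ⟨hg₁, a, ha⟩ := h₁
  obtain ⟨hg₂, b, hb⟩ := h₂
  have ha' : G^[a + 1] j = j := by rw [Function.iterate_succ_apply', ha, hg₁]
  have hb' : G^[b + 1] j = j := by rw [Function.iterate_succ_apply', hb, hg₂]
  calc u₁ = G^[a] j := ha.symm
    _ = G^[a] (G^[b+1] j) := by rw [hb']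
    _ = G^[a + (b+1)] j := (Function.iterate_add_apply _ _ _ _).symm
    _ = G^[b + (a+1)] j := by ring_nf
    _ = G^[b] (G^[a+1] j) := Function.iterate_add_apply _ _ _ _
    _ = G^[b] j := by rw [ha']
    _ = u₂ := hb

noncomputable def pred (G : Fin n → Fin n) (j : Fin n) : Fin n :=
  if h : ∃ u, G u = j ∧ ∃ m, G^[m] j = u then h.choose else j

lemma pred_spec {G : Fin n → Fin n} {j : Fin n} (h : ∃ u, G u = j ∧ ∃ m, G^[m] j = u) :
    G (pred G j) = j ∧ ∃ m, G^[m] j = pred G j := by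
  rw [pred, dif_pos h]; exact h.choose_spec

lemma pc_exists_pred {w : Matrix (Fin n) (Fin n) ℝ} {j : Fin n} {G : Fin n → Fin n}
    (h : PC w j G) : ∃ u, G u = j ∧ ∃ m, G^[m] j = u := by
  obtain ⟨t, ht⟩ := (reflTransGen_iff_iterate G (G j) j).mp (h.2 (G j))
  have ht' : G^[t+1] j = j := by rw [Function.iterate_succ_apply]; exact ht
  exact ⟨G^[t] j, by rw [← Function.iterate_succ_apply' G t j]; exact ht', t, rfl⟩

/-- Weight bookkeeping: total graph weight = forest weight times extra-arc weight. -/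
lemma weight_split {w : Matrix (Fin n) (Fin n) ℝ} {F : Fin n → Option (Fin n)}
    {G : Fin n → Fin n} {i : Fin n} (hFi : F i = none)
    (hFG : ∀ v, v ≠ i → F v = some (G v)) :
    ∏ v, w v (G v) = forestWeight w F * w i (G i) := by
  rw [forestWeight]
  rw [← Finset.mul_prod_erase Finset.univ (fun v => w v (G v)) (Finset.mem_univ i)]
  rw [← Finset.mul_prod_erase Finset.univ (fun v => (F v).elim 1 (fun u => w v u))
    (Finset.mem_univ i)]
  rw [hFi]
  have : ∀ v ∈ Finset.univ.erase i, w v (G v) = (F v).elim 1 (fun u => w v u) := by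
    intro v hv
    rw [hFG v (Finset.ne_of_mem_erase hv)]; rfl
  rw [Finset.prod_congr rfl this]
  simp [mul_comm]

lemma chopped_forest {w : Matrix (Fin n) (Fin n) ℝ} {x : Fin n} {G : Fin n → Fin n}
    (hP : ∀ v, G v ≠ v ∧ 0 < w v (G v)) (hreach : ∀ v, ∃ t, G^[t] v = x) :
    IsInForest w (fun v => if v = x then none else some (G v)) ∧
      arcCount (fun v => if v = x then none else some (G v)) = n - 1 := by
  set F : Fin n → Option (Fin n) := fun v => if v = x then none else some (G v) with hFdef
  have hFG : ∀ a b, Step F a b → a ≠ x ∧ G a = b := by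
    intro a b hab
    rw [Step, hFdef] at hab
    by_cases h : a = x
    · simp [h] at hab
    · simp [h] at hab; exact ⟨h, hab⟩
  refine ⟨⟨?_, ?_⟩, ?_⟩
  · intro v u hvu
    obtain ⟨-, hg⟩ := hFG v u hvu
    subst hg
    exact ⟨Ne.symm (hP v).1, (hP v).2⟩
  · intro v hv
    exact cycle_avoid hFG hv (hreach v)
  · rw [arcCount]
    have : (Finset.univ.filter fun v => (F v).isSome) = Finset.univ.erase x := by
      ext v
      simp only [Finset.mem_filter, Finset.mem_univ, true_and, Finset.mem_erase, and_true]
      rw [hFdef]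
      by_cases h : v = x <;> simp [h]
    rw [this, Finset.card_erase_of_mem (Finset.mem_univ x), Finset.card_univ, Fintype.card_fin]

lemma step_imp {F : Fin n → Option (Fin n)} {G : Fin n → Fin n} {j : Fin n}
    (hFj : F j = none) (hG : ∀ v, v ≠ j → F v = some (G v)) :
    ∀ a b, Step F a b → StepT G a b := by
  intro a b hab
  have ha : a ≠ j := by rintro rfl; rw [Step, hFj] at hab; cases hab
  rw [Step, hG a ha] at hab
  exact (Option.some_injective _ hab).symm ▸ rfl

lemma L2 {w : Matrix (Fin n) (Fin n) ℝ} (hw : ∀ a b, 0 ≤ w a b) (j : Fin n) :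
    ∑ k ∈ Finset.univ.erase j,
        (∑ F : Fin n → Option (Fin n), if TreeTo w j F then forestWeight w F else 0) * w j k
      = ∑ G : Fin n → Fin n, if PC w j G then ∏ v, w v (G v) else 0 := by
  have hrhs : (∑ G : Fin n → Fin n, if PC w j G then ∏ v, w v (G v) else 0)
      = ∑ G ∈ Finset.univ.filter (fun G : Fin n → Fin n => PC w j G), ∏ v, w v (G v) :=
    (Finset.sum_filter _ _).symm
  have hlhs : ∑ k ∈ Finset.univ.erase j,
        (∑ F : Fin n → Option (Fin n), if TreeTo w j F then forestWeight w F else 0) * w j k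
      = ∑ p ∈ ((Finset.univ.erase j) ×ˢ Finset.univ).filter
          (fun p : Fin n × (Fin n → Option (Fin n)) => TreeTo w j p.2 ∧ 0 < w j p.1),
          forestWeight w p.2 * w j p.1 := by
    rw [Finset.sum_filter, Finset.sum_product]
    refine Finset.sum_congr rfl fun k hk => ?_
    rw [Finset.sum_mul]
    refine Finset.sum_congr rfl fun F _ => ?_
    by_cases hT : TreeTo w j F
    · rw [if_pos hT]
      by_cases hp : 0 < w j k
      · rw [if_pos ⟨hT, hp⟩]
      · rw [if_neg (fun h => hp h.2)]
        rw [le_antisymm (not_lt.mp hp) (hw j k), mul_zero]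
    · rw [if_neg hT, zero_mul, if_neg (fun h => hT h.1)]
  rw [hlhs, hrhs]
  refine Finset.sum_nbij'
    (i := fun p : Fin n × (Fin n → Option (Fin n)) =>
      fun v => if v = j then p.1 else (p.2 v).getD j)
    (j := fun G : Fin n → Fin n => (G j, fun v => if v = j then none else some (G v)))
    ?_ ?_ ?_ ?_ ?_
  · rintro ⟨k, F⟩ hp
    simp only [Finset.mem_filter, Finset.mem_product, Finset.mem_erase, Finset.mem_univ,
      and_true, true_and] at hp ⊢
    obtain ⟨hkj, ⟨hF, hc, hFj⟩, hpos⟩ := hp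
    have hroot := root_unique hc hFj
    set G : Fin n → Fin n := fun v => if v = j then k else (F v).getD j with hGdef
    have hGv : ∀ v, v ≠ j → F v = some (G v) := by
      intro v hv
      cases hFv : F v with
      | none => exact absurd ((hroot v).mp hFv) hv
      | some u => simp [hGdef, hv, hFv]
    constructor
    · intro v
      by_cases hv : v = j
      · subst hv; simp only [hGdef, if_pos rfl]; exact ⟨hkj, hpos⟩
      · have := hF.1 v (G v) (hGv v hv)
        exact ⟨Ne.symm this.1, this.2⟩
    · intro v
      exact Relation.ReflTransGen.mono (step_imp hFj hGv) _ _ (tree_reaches hF hc hFj v)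
  · intro G hG
    simp only [Finset.mem_filter, Finset.mem_univ, true_and] at hG
    simp only [Finset.mem_filter, Finset.mem_product, Finset.mem_erase, Finset.mem_univ,
      and_true, true_and]
    have hreach : ∀ v, ∃ t, G^[t] v = j := fun v => (reflTransGen_iff_iterate G v j).mp (hG.2 v)
    obtain ⟨hF, hc⟩ := chopped_forest hG.1 hreach
    exact ⟨(hG.1 j).1, ⟨hF, hc, if_pos rfl⟩, (hG.1 j).2⟩
  · rintro ⟨k, F⟩ hp
    simp only [Finset.mem_filter, Finset.mem_product, Finset.mem_erase, Finset.mem_univ,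
      and_true, true_and] at hp
    obtain ⟨hkj, ⟨hF, hc, hFj⟩, hpos⟩ := hp
    have hroot := root_unique hc hFj
    refine Prod.ext (by simp) ?_
    funext v
    by_cases hv : v = j
    · subst hv; simp [hFj]
    · cases hFv : F v with
      | none => exact absurd ((hroot v).mp hFv) hv
      | some u => simp [hv, hFv]
  · intro G hG
    funext v
    by_cases hv : v = j
    · subst hv; simp
    · simp [hv]
  · rintro ⟨k, F⟩ hp
    simp only [Finset.mem_filter, Finset.mem_product, Finset.mem_erase, Finset.mem_univ,
      and_true, true_and] at hp
    obtain ⟨hkj, ⟨hF, hc, hFj⟩, hpos⟩ := hp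
    have hroot := root_unique hc hFj
    set G : Fin n → Fin n := fun v => if v = j then k else (F v).getD j with hGdef
    have hGv : ∀ v, v ≠ j → F v = some (G v) := by
      intro v hv
      cases hFv : F v with
      | none => exact absurd ((hroot v).mp hFv) hv
      | some u => simp [hGdef, hv, hFv]
    have := weight_split (w := w) (G := G) hFj hGv
    rw [this]
    have : G j = k := by simp [hGdef]
    rw [this]

lemma L1 {w : Matrix (Fin n) (Fin n) ℝ} (hw : ∀ a b, 0 ≤ w a b) (j : Fin n) :
    ∑ i ∈ Finset.univ.erase j,
        (∑ F : Fin n → Option (Fin n), if TreeTo w i F then forestWeight w F else 0) * w i j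
      = ∑ G : Fin n → Fin n, if PC w j G then ∏ v, w v (G v) else 0 := by
  have hrhs : (∑ G : Fin n → Fin n, if PC w j G then ∏ v, w v (G v) else 0)
      = ∑ G ∈ Finset.univ.filter (fun G : Fin n → Fin n => PC w j G), ∏ v, w v (G v) :=
    (Finset.sum_filter _ _).symm
  have hlhs : ∑ i ∈ Finset.univ.erase j,
        (∑ F : Fin n → Option (Fin n), if TreeTo w i F then forestWeight w F else 0) * w i j
      = ∑ p ∈ ((Finset.univ.erase j) ×ˢ Finset.univ).filter
          (fun p : Fin n × (Fin n → Option (Fin n)) => TreeTo w p.1 p.2 ∧ 0 < w p.1 j),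
          forestWeight w p.2 * w p.1 j := by
    rw [Finset.sum_filter, Finset.sum_product]
    refine Finset.sum_congr rfl fun i hi => ?_
    rw [Finset.sum_mul]
    refine Finset.sum_congr rfl fun F _ => ?_
    by_cases hT : TreeTo w i F
    · rw [if_pos hT]
      by_cases hp : 0 < w i j
      · rw [if_pos ⟨hT, hp⟩]
      · rw [if_neg (fun h => hp h.2)]
        rw [le_antisymm (not_lt.mp hp) (hw i j), mul_zero]
    · rw [if_neg hT, zero_mul, if_neg (fun h => hT h.1)]
  rw [hlhs, hrhs]
  refine Finset.sum_nbij'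
    (i := fun p : Fin n × (Fin n → Option (Fin n)) => fun v => (p.2 v).getD j)
    (j := fun G : Fin n → Fin n =>
      (pred G j, fun v => if v = pred G j then none else some (G v)))
    ?_ ?_ ?_ ?_ ?_
  · rintro ⟨i, F⟩ hp
    simp only [Finset.mem_filter, Finset.mem_product, Finset.mem_erase, Finset.mem_univ,
      and_true, true_and] at hp ⊢
    obtain ⟨hij, ⟨hF, hc, hFi⟩, hpos⟩ := hp
    have hroot := root_unique hc hFi
    set G : Fin n → Fin n := fun v => (F v).getD j with hGdef
    have hGi : G i = j := by simp [hGdef, hFi]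
    have hGv : ∀ v, v ≠ i → F v = some (G v) := by
      intro v hv
      cases hFv : F v with
      | none => exact absurd ((hroot v).mp hFv) hv
      | some u => simp [hGdef, hFv]
    constructor
    · intro v
      by_cases hv : v = i
      · subst hv; rw [hGi]; exact ⟨hij.symm, hpos⟩
      · have := hF.1 v (G v) (hGv v hv)
        exact ⟨Ne.symm this.1, this.2⟩
    · intro v
      exact (Relation.ReflTransGen.mono (step_imp hFi hGv) _ _ (tree_reaches hF hc hFi v)).tail hGi
  · intro G hG
    simp only [Finset.mem_filter, Finset.mem_univ, true_and] at hG
    simp only [Finset.mem_filter, Finset.mem_product, Finset.mem_erase, Finset.mem_univ,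
      and_true, true_and]
    obtain ⟨hGi, m, hm⟩ := pred_spec (pc_exists_pred hG)
    set i := pred G j with hidef
    have hij : i ≠ j := by
      intro h
      exact (hG.1 i).1 (by rw [hGi, h])
    have hreach : ∀ v, ∃ t, G^[t] v = i := by
      intro v
      obtain ⟨t, ht⟩ := (reflTransGen_iff_iterate G v j).mp (hG.2 v)
      exact ⟨m + t, by rw [Function.iterate_add_apply, ht, hm]⟩
    obtain ⟨hF, hc⟩ := chopped_forest hG.1 hreach
    exact ⟨hij, ⟨hF, hc, if_pos rfl⟩, by rw [← hGi]; exact (hG.1 i).2⟩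
  · rintro ⟨i, F⟩ hp
    simp only [Finset.mem_filter, Finset.mem_product, Finset.mem_erase, Finset.mem_univ,
      and_true, true_and] at hp
    obtain ⟨hij, ⟨hF, hc, hFi⟩, hpos⟩ := hp
    have hroot := root_unique hc hFi
    set G : Fin n → Fin n := fun v => (F v).getD j with hGdef
    have hGi : G i = j := by simp [hGdef, hFi]
    have hGv : ∀ v, v ≠ i → F v = some (G v) := by
      intro v hv
      cases hFv : F v with
      | none => exact absurd ((hroot v).mp hFv) hv
      | some u => simp [hGdef, hFv]
    have hiorb : ∃ m, G^[m] j = i :=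
      (reflTransGen_iff_iterate G j i).mp (Relation.ReflTransGen.mono (step_imp hFi hGv) _ _ (tree_reaches hF hc hFi j))
    have hex : ∃ u, G u = j ∧ ∃ m, G^[m] j = u := ⟨i, hGi, hiorb⟩
    have hpi : pred G j = i := pred_uniq G j (pred_spec hex) ⟨hGi, hiorb⟩
    refine Prod.ext (by simpa using hpi) ?_
    funext v
    simp only [hpi]
    by_cases hv : v = i
    · subst hv; simp [hFi]
    · simp only [if_neg hv]
      exact (hGv v hv).symm
  · intro G hG
    simp only [Finset.mem_filter, Finset.mem_univ, true_and] at hG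
    obtain ⟨hGi, m, hm⟩ := pred_spec (pc_exists_pred hG)
    funext v
    by_cases hv : v = pred G j
    · subst hv; simpa using hGi.symm
    · simp [hv]
  · rintro ⟨i, F⟩ hp
    simp only [Finset.mem_filter, Finset.mem_product, Finset.mem_erase, Finset.mem_univ,
      and_true, true_and] at hp
    obtain ⟨hij, ⟨hF, hc, hFi⟩, hpos⟩ := hp
    have hroot := root_unique hc hFi
    set G : Fin n → Fin n := fun v => (F v).getD j with hGdef
    have hGi : G i = j := by simp [hGdef, hFi]
    have hGv : ∀ v, v ≠ i → F v = some (G v) := by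
      intro v hv
      cases hFv : F v with
      | none => exact absurd ((hroot v).mp hFv) hv
      | some u => simp [hGdef, hFv]
    have := weight_split (w := w) (G := G) hFi hGv
    rw [this, hGi]

noncomputable def tw (w : Matrix (Fin n) (Fin n) ℝ) (j : Fin n) : ℝ :=
  ∑ F : Fin n → Option (Fin n), if TreeTo w j F then forestWeight w F else 0

lemma tw_fixed {w : Matrix (Fin n) (Fin n) ℝ} (hw : ∀ a b, 0 ≤ w a b)
    (hrow : ∀ i, ∑ k, w i k = 1) (j : Fin n) :
    ∑ i, tw w i * w i j = tw w j := by
  have h1 : ∑ i, tw w i * w i j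
      = tw w j * w j j + ∑ i ∈ Finset.univ.erase j, tw w i * w i j :=
    (Finset.add_sum_erase Finset.univ (fun i => tw w i * w i j) (Finset.mem_univ j)).symm
  have h2 : tw w j = tw w j * w j j + ∑ k ∈ Finset.univ.erase j, tw w j * w j k := by
    conv_lhs => rw [← mul_one (tw w j), ← hrow j, Finset.mul_sum]
    rw [← Finset.add_sum_erase Finset.univ (fun k => tw w j * w j k) (Finset.mem_univ j)]
  have h3 : ∑ i ∈ Finset.univ.erase j, tw w i * w i j
      = ∑ k ∈ Finset.univ.erase j, tw w j * w j k := (L1 hw j).trans (L2 hw j).symm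
  linarith

lemma forestWeight_pos {w : Matrix (Fin n) (Fin n) ℝ} {F : Fin n → Option (Fin n)}
    (hF : IsInForest w F) : 0 < forestWeight w F := by
  refine Finset.prod_pos fun v _ => ?_
  cases hv : F v with
  | none => exact one_pos
  | some u => exact (hF.1 v u hv).2

lemma tw_nonneg (w : Matrix (Fin n) (Fin n) ℝ) (j : Fin n) : 0 ≤ tw w j := by
  refine Finset.sum_nonneg fun F _ => ?_
  split_ifs with h
  · exact (forestWeight_pos h.1).le
  · exact le_refl 0

lemma pow_entry_nonneg {T : Matrix (Fin n) (Fin n) ℝ} (hT : ∀ i j, 0 ≤ T i j) (k : ℕ) :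
    ∀ i j, 0 ≤ (T ^ k) i j := by
  induction k with
  | zero =>
    intro i j
    by_cases h : i = j <;> simp [pow_zero, Matrix.one_apply, h]
  | succ k ih =>
    intro i j
    rw [pow_succ, Matrix.mul_apply]
    exact Finset.sum_nonneg fun u _ => mul_nonneg (ih i u) (hT u j)

lemma exists_tree {T : Matrix (Fin n) (Fin n) ℝ} (hS : IsStochastic T)
    (hIrr : IsIrreducible T) (j : Fin n) : ∃ F, TreeTo T j F := by
  set d : Fin n → ℕ := fun v => Nat.find (hIrr v j) with hddef
  have hd0 : ∀ v, v ≠ j → d v ≠ 0 := by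
    intro v hv h0
    have hsp := Nat.find_spec (hIrr v j)
    rw [show Nat.find (hIrr v j) = 0 from h0, pow_zero, Matrix.one_apply_ne hv] at hsp
    exact lt_irrefl 0 hsp
  have hstep : ∀ v, v ≠ j → ∃ u, v ≠ u ∧ 0 < T v u ∧ d u < d v := by
    intro v hv
    obtain ⟨m, hm⟩ : ∃ m, d v = m + 1 := ⟨d v - 1, by have := hd0 v hv; omega⟩
    have hspec : 0 < (T ^ (m + 1)) v j := by rw [← hm]; exact Nat.find_spec (hIrr v j)
    rw [pow_succ', Matrix.mul_apply] at hspec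
    have : ∃ u, 0 < T v u * (T ^ m) u j := by
      by_contra hcon
      push_neg at hcon
      exact absurd (Finset.sum_nonpos fun u _ => hcon u) (not_le.mpr hspec)
    obtain ⟨u, hu⟩ := this
    have h1 : 0 < T v u := by
      rcases mul_pos_iff.mp hu with ⟨h, -⟩ | ⟨h, -⟩
      · exact h
      · exact absurd h (not_lt.mpr (hS.1 v u))
    have h2 : 0 < (T ^ m) u j := by
      rcases mul_pos_iff.mp hu with ⟨-, h⟩ | ⟨-, h⟩
      · exact h
      · exact absurd h (not_lt.mpr (pow_entry_nonneg hS.1 m u j))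
    have hdu : d u ≤ m := Nat.find_min' (hIrr u j) h2
    refine ⟨u, ?_, h1, by omega⟩
    rintro rfl
    have : d v ≤ m := Nat.find_min' (hIrr v j) h2
    omega
  choose! nxt hnxt using hstep
  refine ⟨fun v => if v = j then none else some (nxt v), ⟨⟨?_, ?_⟩, ?_, if_pos rfl⟩⟩
  · intro v u hvu
    by_cases h : v = j
    · simp [h] at hvu
    · simp only [if_neg h] at hvu
      obtain ⟨h1, h2, -⟩ := hnxt v h
      cases hvu
      exact ⟨h1, h2⟩
  · intro v hv
    have hdec : ∀ a b, Step (fun v => if v = j then none else some (nxt v)) a b → d b < d a := by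
      intro a b hab
      by_cases h : a = j
      · simp [Step, h] at hab
      · simp only [Step, if_neg h] at hab
        cases hab
        exact (hnxt a h).2.2
    have : ∀ a b, Relation.TransGen (Step fun v => if v = j then none else some (nxt v)) a b →
        d b < d a := by
      intro a b h
      induction h with
      | single hs => exact hdec _ _ hs
      | tail _ hs ih => exact lt_trans (hdec _ _ hs) ih
    exact lt_irrefl _ (this v v hv)
  · rw [arcCount]
    have : (Finset.univ.filter fun v =>
        ((fun v => if v = j then none else some (nxt v)) v).isSome) = Finset.univ.erase j := by
      ext v
      simp only [Finset.mem_filter, Finset.mem_univ, true_and, Finset.mem_erase, and_true]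
      by_cases h : v = j <;> simp [h]
    rw [this, Finset.card_erase_of_mem (Finset.mem_univ j), Finset.card_univ, Fintype.card_fin]

lemma max_principle {T : Matrix (Fin n) (Fin n) ℝ} (hS : IsStochastic T)
    (hIrr : IsIrreducible T) {v : Fin n → ℝ} (hv : T.mulVec v = v) (a b : Fin n) :
    v a = v b := by
  rcases Nat.eq_zero_or_pos n with hn | hn
  · exact absurd a.pos (by omega)
  obtain ⟨i₀, -, hmax⟩ := Finset.exists_max_image Finset.univ v
    ⟨⟨0, hn⟩, Finset.mem_univ _⟩
  set M := v i₀ with hM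
  have hstepS : ∀ x, v x = M → ∀ y, 0 < T x y → v y = M := by
    intro x hx y hTxy
    have hrow : ∑ k, T x k * (M - v k) = 0 := by
      have h1 : ∑ k, T x k * v k = v x := congrFun hv x
      have h2 : ∑ k, T x k * M = M := by
        rw [← Finset.sum_mul, hS.2 x, one_mul]
      simp only [mul_sub]
      rw [Finset.sum_sub_distrib, h1, h2, hx, sub_self]
    have hterm : ∀ k ∈ Finset.univ, 0 ≤ T x k * (M - v k) := by
      intro k _
      exact mul_nonneg (hS.1 x k) (sub_nonneg.mpr (hmax k (Finset.mem_univ k)))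
    have := (Finset.sum_eq_zero_iff_of_nonneg hterm).mp hrow y (Finset.mem_univ y)
    have hMy : M - v y = 0 := by
      by_contra hne
      exact hne (by
        have := mul_eq_zero.mp this
        rcases this with h | h
        · exact absurd h (ne_of_gt hTxy)
        · exact h)
    linarith [hMy]
  have hpow : ∀ k x y, v x = M → 0 < (T ^ k) x y → v y = M := by
    intro k
    induction k with
    | zero =>
      intro x y hx hxy
      by_cases h : x = y
      · exact h ▸ hx
      · rw [pow_zero, Matrix.one_apply_ne h] at hxy
        exact absurd hxy (lt_irrefl 0)
    | succ k ih =>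
      intro x y hx hxy
      rw [pow_succ, Matrix.mul_apply] at hxy
      have : ∃ u, 0 < (T ^ k) x u * T u y := by
        by_contra hcon
        push_neg at hcon
        exact absurd (Finset.sum_nonpos fun u _ => hcon u) (not_le.mpr hxy)
      obtain ⟨u, hu⟩ := this
      have h1 : 0 < (T ^ k) x u := by
        rcases mul_pos_iff.mp hu with ⟨h, -⟩ | ⟨h, -⟩
        · exact h
        · exact absurd h (not_lt.mpr (pow_entry_nonneg hS.1 k x u))
      have h2 : 0 < T u y := by
        rcases mul_pos_iff.mp hu with ⟨-, h⟩ | ⟨-, h⟩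
        · exact h
        · exact absurd h (not_lt.mpr (hS.1 u y))
      exact hstepS u (ih x u hx h1) y h2
  have hall : ∀ y, v y = M := by
    intro y
    obtain ⟨k, hk⟩ := hIrr i₀ y
    exact hpow k i₀ y rfl hk
  rw [hall a, hall b]

lemma ker_dim_one {T : Matrix (Fin n) (Fin n) ℝ} (hS : IsStochastic T)
    (hIrr : IsIrreducible T) (hn : 0 < n) :
    Module.finrank ℝ (LinearMap.ker (Matrix.mulVecLin (T - 1))) = 1 := by
  have hker : LinearMap.ker (Matrix.mulVecLin (T - 1))
      = Submodule.span ℝ {(fun _ => (1:ℝ) : Fin n → ℝ)} := by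
    apply le_antisymm
    · intro v hv
      rw [LinearMap.mem_ker, Matrix.mulVecLin_apply, Matrix.sub_mulVec,
        Matrix.one_mulVec, sub_eq_zero] at hv
      have := max_principle hS hIrr hv
      have hveq : v = v ⟨0, hn⟩ • (fun _ => (1:ℝ)) := by
        funext x
        simp [this x ⟨0, hn⟩]
      rw [hveq]
      exact Submodule.smul_mem _ _ (Submodule.mem_span_singleton_self _)
    · rw [Submodule.span_le, Set.singleton_subset_iff]
      rw [SetLike.mem_coe, LinearMap.mem_ker, Matrix.mulVecLin_apply, Matrix.sub_mulVec,
        Matrix.one_mulVec, sub_eq_zero]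
      funext x
      simp [Matrix.mulVec, dotProduct, hS.2 x]
  rw [hker]
  refine finrank_span_singleton ?_
  intro h
  have := congrFun h ⟨0, hn⟩
  simp at this

lemma ker_transpose_dim_one {T : Matrix (Fin n) (Fin n) ℝ} (hS : IsStochastic T)
    (hIrr : IsIrreducible T) (hn : 0 < n) :
    Module.finrank ℝ (LinearMap.ker (Matrix.mulVecLin (T - 1)ᵀ)) = 1 := by
  set A := T - 1 with hA
  have h1 := LinearMap.finrank_range_add_finrank_ker (Matrix.mulVecLin A)
  have h2 := LinearMap.finrank_range_add_finrank_ker (Matrix.mulVecLin Aᵀ)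
  have hrank : A.rank = Aᵀ.rank := (Matrix.rank_transpose A).symm
  rw [Module.finrank_fintype_fun_eq_card, Fintype.card_fin] at h1 h2
  have hk1 := ker_dim_one hS hIrr hn
  rw [← hA] at hk1
  have hr1 : Matrix.rank A = Module.finrank ℝ (LinearMap.range (Matrix.mulVecLin A)) := rfl
  have hr2 : Matrix.rank Aᵀ = Module.finrank ℝ (LinearMap.range (Matrix.mulVecLin Aᵀ)) := rfl
  omega

theorem main {T : Matrix (Fin n) (Fin n) ℝ} (hS : IsStochastic T) (hIrr : IsIrreducible T)
    {π : Fin n → ℝ} (hπ1 : ∑ i, π i = 1) (hπ2 : ∀ j, ∑ i, π i * T i j = π j) :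
    ∀ j, π j = tw T j / ∑ k, tw T k := by
  intro j
  have hn : 0 < n := j.pos
  set K := LinearMap.ker (Matrix.mulVecLin (T - 1)ᵀ) with hK
  have hmemK : ∀ x : Fin n → ℝ, (∀ j', ∑ i, x i * T i j' = x j') → x ∈ K := by
    intro x hx
    rw [hK, LinearMap.mem_ker, Matrix.mulVecLin_apply]
    funext j'
    rw [Matrix.mulVec, Pi.zero_apply]
    show ∑ i, (T - 1)ᵀ j' i * x i = 0
    simp only [Matrix.transpose_apply, Matrix.sub_apply, Matrix.one_apply, sub_mul]
    rw [Finset.sum_sub_distrib]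
    have e1 : ∑ i, T i j' * x i = x j' := by
      rw [← hx j']; exact Finset.sum_congr rfl fun i _ => mul_comm _ _
    have e2 : ∑ i, (if i = j' then (1:ℝ) else 0) * x i = x j' := by
      simp [ite_mul]
    rw [e1, e2, sub_self]
  have hq := tw_fixed hS.1 hS.2
  have hqK : tw T ∈ K := hmemK _ hq
  have hπK : π ∈ K := hmemK _ hπ2
  have hqj_pos : ∀ j', 0 < tw T j' := by
    intro j'
    obtain ⟨F₀, hF₀⟩ := exists_tree hS hIrr j'
    rw [tw]
    refine Finset.sum_pos' (fun F _ => ?_) ⟨F₀, Finset.mem_univ F₀, ?_⟩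
    · split_ifs with h
      · exact (forestWeight_pos h.1).le
      · exact le_refl 0
    · rw [if_pos hF₀]
      exact forestWeight_pos hF₀.1
  have hsum_pos : 0 < ∑ k, tw T k :=
    Finset.sum_pos (fun k _ => hqj_pos k) ⟨j, Finset.mem_univ j⟩
  have hqne : tw T ≠ 0 := by
    intro h
    have := hqj_pos j
    rw [h] at this
    exact lt_irrefl 0 this
  have hspan : Submodule.span ℝ {tw T} = K := by
    refine Submodule.eq_of_le_of_finrank_eq ?_ ?_
    · rw [Submodule.span_le, Set.singleton_subset_iff]
      exact hqK
    · rw [finrank_span_singleton hqne, hK, ker_transpose_dim_one hS hIrr hn]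
  have hπspan : π ∈ Submodule.span ℝ {tw T} := hspan.symm ▸ hπK
  obtain ⟨c, hc⟩ := Submodule.mem_span_singleton.mp hπspan
  have hsum : c * ∑ k, tw T k = 1 := by
    rw [Finset.mul_sum, ← hπ1]
    exact Finset.sum_congr rfl fun i _ => by rw [← hc]; rfl
  have hπj : π j = c * tw T j := by rw [← hc]; rfl
  rw [hπj]
  rw [eq_div_iff (ne_of_gt hsum_pos), mul_assoc, mul_comm (tw T j), ← mul_assoc, hsum, one_mul]

lemma tw_eq (w : Matrix (Fin n) (Fin n) ℝ) (j : Fin n) : tw w j = treeWeight w j := by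
  rw [tw, treeWeight]
  refine Finset.sum_congr rfl fun F _ => ?_
  rw [show TreeTo w j F ↔ (IsInForest w F ∧ arcCount F = n - 1 ∧ F j = none) from Iff.rfl]
  split_ifs <;> rfl

end MFPT

namespace MFPT

/-- Markov chain tree theorem. The stationary probability of state `j`
equals `q_j / Σ_k q_k`, where `q_j` is the total weight of spanning trees of the chain's
digraph converging to `j`. -/
theorem markov_chain_tree_theorem {n : ℕ} (T : Matrix (Fin n) (Fin n) ℝ)
    (hS : IsStochastic T) (hIrr : IsIrreducible T) (hErg : IsErgodic T)
    (π : Fin n → ℝ) (hπ : IsStationary T π) :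
    ∀ j, π j = treeWeight T j / ∑ k, treeWeight T k := by
  intro j
  have h := main hS hIrr hπ.2.1 hπ.2.2 j
  rw [tw_eq] at h
  rw [h]
  congr 1
  exact Finset.sum_congr rfl fun k _ => tw_eq T k

end MFPT
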